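/- arXiv:1701.08026 — 2 statements merged into one kernel-verified Lean document; each statement's English description precedes it below -/
import Mathlib

section
/- For the simple harmonic oscillator with ω > 0 and E > 0, the eikonal σ_E(Q,Q') = |∫_{Q'}^{Q} √(2E − ω²q²) dq| satisfies σ_E(Q,Q') ≤ πE/ω for all Q, Q' in the interval [−√(2E)/ω, √(2E)/ω], with equality when Q = √(2E)/ω and Q' = −√(2E)/ω. -/
open intervalIntegral

/-- Myers-type diameter bound for the harmonic oscillator: the eikonal
`σ_E(Q,Q') = |∫_{Q'}^{Q} √(2E − ω²q²) dq|` is at most `πE/ω` on the allowed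
interval `[−√(2E)/ω, √(2E)/ω]`, with equality for the endpoints. -/
theorem sho_eikonal_diameter (E ω : ℝ) (hE : 0 < E) (hω : 0 < ω) :
    (∀ Q ∈ Set.Icc (-(Real.sqrt (2*E) / ω)) (Real.sqrt (2*E) / ω),
     ∀ Q' ∈ Set.Icc (-(Real.sqrt (2*E) / ω)) (Real.sqrt (2*E) / ω),
      |∫ q in Q'..Q, Real.sqrt (2*E - ω^2 * q^2)| ≤ Real.pi * E / ω) ∧
    |∫ q in (-(Real.sqrt (2*E) / ω))..(Real.sqrt (2*E) / ω),
        Real.sqrt (2*E - ω^2 * q^2)| = Real.pi * E / ω := by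
  set a := Real.sqrt (2*E) / ω with ha
  have h2E : (0:ℝ) < 2*E := by linarith
  have ha0 : 0 < a := div_pos (Real.sqrt_pos.2 h2E) hω
  have hcont : Continuous fun q : ℝ => Real.sqrt (2*E - ω^2*q^2) := by
    continuity
  have hint : ∀ u v : ℝ, IntervalIntegrable (fun q => Real.sqrt (2*E - ω^2*q^2))
      MeasureTheory.volume u v := fun u v => hcont.intervalIntegrable u v
  have hsq : a^2 = 2*E/ω^2 := by
    rw [ha, div_pow, Real.sq_sqrt h2E.le]
  have key : ∀ q : ℝ, Real.sqrt (2*E - ω^2*q^2)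
      = Real.sqrt (2*E) * Real.sqrt (1 - (q/a)^2) := by
    intro q
    rw [← Real.sqrt_mul h2E.le]
    congr 1
    have hqa : (q/a)^2 = ω^2*q^2/(2*E) := by
      rw [div_pow, hsq]
      field_simp
    rw [hqa]
    field_simp
  have hval : ∫ q in (-a)..a, Real.sqrt (2*E - ω^2 * q^2) = Real.pi * E / ω := by
    calc ∫ q in (-a)..a, Real.sqrt (2*E - ω^2 * q^2)
        = ∫ q in (-a)..a, Real.sqrt (2*E) * Real.sqrt (1 - (q/a)^2) := by
          simp only [key]
      _ = Real.sqrt (2*E) * ∫ q in (-a)..a, Real.sqrt (1 - (q/a)^2) := by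
          rw [intervalIntegral.integral_const_mul]
      _ = Real.sqrt (2*E) * (a * ∫ x in (-a/a)..(a/a), Real.sqrt (1 - x^2)) := by
          rw [intervalIntegral.integral_comp_div (fun x => Real.sqrt (1 - x^2)) ha0.ne']
          simp [smul_eq_mul]
      _ = Real.sqrt (2*E) * (a * (Real.pi / 2)) := by
          rw [neg_div, div_self ha0.ne', integral_sqrt_one_sub_sq]
      _ = Real.pi * E / ω := by
          rw [ha]
          rw [show Real.sqrt (2*E) * (Real.sqrt (2*E)/ω * (Real.pi/2))
              = Real.sqrt (2*E) * Real.sqrt (2*E) * (Real.pi/2) / ω by ring,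
            Real.mul_self_sqrt h2E.le]
          ring
  constructor
  · intro Q hQ Q' hQ'
    rw [← hval]
    have hmono : ∀ u v : ℝ, u ∈ Set.Icc (-a) a → v ∈ Set.Icc (-a) a → u ≤ v →
        |∫ q in u..v, Real.sqrt (2*E - ω^2 * q^2)|
          ≤ ∫ q in (-a)..a, Real.sqrt (2*E - ω^2 * q^2) := by
      intro u v hu hv huv
      rw [abs_of_nonneg (intervalIntegral.integral_nonneg huv
        (fun x _ => Real.sqrt_nonneg _))]
      exact intervalIntegral.integral_mono_interval hu.1 huv hv.2
        (Filter.Eventually.of_forall fun x => Real.sqrt_nonneg _) (hint _ _)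
    rcases le_total Q' Q with h | h
    · exact hmono Q' Q hQ' hQ h
    · rw [intervalIntegral.integral_symm, abs_neg]
      exact hmono Q Q' hQ hQ' h
  · rw [hval, abs_of_nonneg]
    positivity
end

section
/- There exist real numbers k₁, k₂ < 0 and B > 0 with |k₂| < B²/4 < |k₁| (so the curvature eigenvalue k₁ + B²/4 is negative) but nevertheless B²/2 > √(|k₁||k₂|) + (|k₁| + |k₂|)/2 (so the system is stable). Hence positivity of curvature is not necessary for stability. -/
/-- Positivity of curvature is not necessary for stability: there exist
`k₁, k₂ < 0` and `B > 0` with `|k₂| < B²/4 < |k₁|` (a negative curvature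
eigenvalue) yet `B²/2 > √(|k₁||k₂|) + (|k₁|+|k₂|)/2` (stability). -/
theorem stability_without_positive_curvature :
    ∃ k₁ k₂ B : ℝ, k₁ < 0 ∧ k₂ < 0 ∧ 0 < B ∧
      |k₂| < B^2 / 4 ∧ B^2 / 4 < |k₁| ∧
      Real.sqrt (|k₁| * |k₂|) + (|k₁| + |k₂|) / 2 < B^2 / 2 := by
  refine ⟨-4, -1/100, 3, by norm_num, by norm_num, by norm_num, ?_, ?_, ?_⟩
  · rw [abs_of_neg (by norm_num)]; norm_num
  · rw [abs_of_neg (by norm_num : (-4:ℝ) < 0)]; norm_num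
  · rw [abs_of_neg (by norm_num : (-4:ℝ) < 0), abs_of_neg (by norm_num : (-1/100:ℝ) < 0)]
    have h : Real.sqrt (4 * -(-1/100)) = 1/5 := by
      rw [show (4 : ℝ) * -(-1/100) = (1/5)^2 by norm_num]
      exact Real.sqrt_sq (by norm_num)
    rw [show -(-4:ℝ) = 4 by norm_num, h]; norm_num
end
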